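/- arXiv:2512.08020 — 3 statements merged into one kernel-verified Lean document; each statement's English description precedes it below -/
import Mathlib

section
/- For all real numbers r ≥ 13 and α with 1.314 ≤ α ≤ 1.648: 5·((r−1)·α·r + (α·r − r)·(2r − α·r) − 2)/2 · (rα−2)(rα−3)/((15−2)(15−3)) − 203·rα·(rα−1)(rα−2)(rα−3)/(9·15·(15−1)·(15−3)) ≥ r(r−1)(r−2)(r−3)/64. -/
set_option maxHeartbeats 1000000

theorem stmt_14 (r α : ℝ) (hr : 13 ≤ r) (h1 : 1.314 ≤ α) (h2 : α ≤ 1.648) :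
    5*((r-1)*α*r + (α*r - r)*(2*r - α*r) - 2)/2 * ((r*α-2)*(r*α-3)/((15-2)*(15-3)))
      - 203*(r*α)*(r*α-1)*(r*α-2)*(r*α-3)/(9*15*(15-1)*(15-3))
      ≥ r*(r-1)*(r-2)*(r-3)/64 := by
  have hu : (0:ℝ) ≤ α - 1.314 := by linarith
  have hv : (0:ℝ) ≤ 1.648 - α := by linarith
  have huv : (0:ℝ) ≤ (α - 1.314) * (1.648 - α) := mul_nonneg hu hv
  have hs : (0:ℝ) ≤ r - 13 := by linarith
  have hc0 : (0:ℝ) ≤ -31285/104 + 56513/135*α - 2663843/1620*α^2 + 1128413/540*α^3 - 577811/810*α^4 := by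
    nlinarith [huv, mul_nonneg huv huv, mul_nonneg (mul_nonneg huv hu) hu, mul_nonneg (mul_nonneg huv hv) hv, sq_nonneg (α-1.5)]
  have hc1 : (0:ℝ) ≤ -3173/32 + 320701/3510*α - 362861/810*α^2 + 112151/180*α^3 - 88894/405*α^4 := by
    nlinarith [huv, mul_nonneg huv huv, mul_nonneg (mul_nonneg huv hu) hu, mul_nonneg (mul_nonneg huv hv) hv, sq_nonneg (α-1.5)]
  have hc2 : (0:ℝ) ≤ -10443/832 + 345/52*α - 475393/10530*α^2 + 12527/180*α^3 - 3419/135*α^4 := by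
    nlinarith [huv, mul_nonneg huv huv, mul_nonneg (mul_nonneg huv hu) hu, mul_nonneg (mul_nonneg huv hv) hv, sq_nonneg (α-1.5)]
  have hc3 : (0:ℝ) ≤ -23/32 + 25/156*α - 155/78*α^2 + 24227/7020*α^3 - 526/405*α^4 := by
    nlinarith [huv, mul_nonneg huv huv, mul_nonneg (mul_nonneg huv hu) hu, mul_nonneg (mul_nonneg huv hv) hv, sq_nonneg (α-1.5)]
  have hc4 : (0:ℝ) ≤ -1/64 - 5/156*α^2 + 5/78*α^3 - 263/10530*α^4 := by
    nlinarith [huv, mul_nonneg huv huv, mul_nonneg (mul_nonneg huv hu) hu, mul_nonneg (mul_nonneg huv hv) hv, sq_nonneg (α-1.5)]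
  have hs2 : (0:ℝ) ≤ (r-13)^2 := sq_nonneg _
  have hs3 : (0:ℝ) ≤ (r-13)^3 := pow_nonneg hs 3
  have hs4 : (0:ℝ) ≤ (r-13)^4 := pow_nonneg hs 4
  linarith [hc0, mul_nonneg hc1 hs, mul_nonneg hc2 hs2, mul_nonneg hc3 hs3, mul_nonneg hc4 hs4]
end

section
/- For all real numbers r ≥ 13 and α with 1.2274 ≤ α ≤ 1.435: 5·((r−1)·α·r + (α·r − r)·(2r − α·r) − 2)/2 · (rα−2)(rα−3)/((12−2)(12−3)) − 203·rα·(rα−1)(rα−2)(rα−3)/(9·12·(12−1)·(12−3)) ≥ r(r−1)(r−2)(r−3)/64. -/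
theorem stmt_15 (r α : ℝ) (hr : 13 ≤ r) (h1 : 1.2274 ≤ α) (h2 : α ≤ 1.435) :
    5*((r-1)*α*r + (α*r - r)*(2*r - α*r) - 2)/2 * ((r*α-2)*(r*α-3)/((12-2)*(12-3)))
      - 203*(r*α)*(r*α-1)*(r*α-2)*(r*α-3)/(9*12*(12-1)*(12-3))
      ≥ r*(r-1)*(r-2)*(r-3)/64 := by
  have h1' := sub_nonneg.2 h1
  have h2' := sub_nonneg.2 h2
  have hr' := sub_nonneg.2 hr
  have h12 := mul_nonneg h1' h2'
  have hg : 0 < -125/2673*α^4 + α^3/9 - α^2/18 - 1/64 := by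
    nlinarith [h12, mul_nonneg h12 (sq_nonneg (α+0.1433)), sq_nonneg (α - 1.33),
      mul_nonneg h1' h1', mul_nonneg h2' h2']
  have hh3 : 0 < 3/32 + 5/18*α - 5/9*α^2 + 401/1782*α^3 := by
    nlinarith [h12, mul_nonneg h12 h1', sq_nonneg (α-1.3)]
  have hq13 : 0 ≤ 169*(-125/2673*α^4 + α^3/9 - α^2/18 - 1/64)
      + 13*(3/32 + 5/18*α - 5/9*α^2 + 401/1782*α^3) + (-97/192 + 2/3*α - 71/243*α^2) := by
    nlinarith [h12, mul_nonneg h12 (sq_nonneg (α+0.1433)), sq_nonneg (α - 1.33),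
      mul_nonneg h12 h1', mul_nonneg h12 h2']
  have hq : 0 ≤ (-125/2673*α^4 + α^3/9 - α^2/18 - 1/64)*r^2
      + (3/32 + 5/18*α - 5/9*α^2 + 401/1782*α^3)*r + (-97/192 + 2/3*α - 71/243*α^2) := by
    nlinarith [hq13, mul_nonneg (mul_nonneg hr' hr') hg.le, mul_nonneg hr' hg.le,
      mul_nonneg hr' hh3.le]
  nlinarith [mul_nonneg (sq_nonneg r) hq, mul_nonneg hr' h1', h1, hr]
end

section
/- The function f(α) = (α−1)³/(α⁴·(α+2)) is monotonically increasing on the interval (1, 1.23]. -/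
theorem stmt_18 :
    StrictMonoOn (fun α : ℝ => (α-1)^3 / (α^4 * (α+2))) (Set.Ioc 1 1.23) := by
  intro a ha b hb hab
  obtain ⟨ha1, ha2⟩ := ha
  obtain ⟨hb1, hb2⟩ := hb
  simp only
  rw [div_lt_div_iff₀ (by positivity) (by positivity)]
  set x := a - 1 with hxdef
  set y := b - 1 with hydef
  have hx : 0 < x := by simp [hxdef]; linarith
  have hxy : x < y := by simp [hxdef, hydef]; linarith
  have hy2 : y ≤ 0.23 := by simp [hydef]; norm_num at hb2 ⊢; linarith
  have hy : 0 < y := lt_trans hx hxy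
  have hx2 : x ≤ 0.23 := le_of_lt (lt_of_lt_of_le hxy hy2)
  have hpr : 0 < x * y := mul_pos hx hy
  have h1 : x * y ≤ 0.0529 := by nlinarith
  have hs : x * y * (7 + x + y) ≤ 0.0529 * 7.46 :=
    mul_le_mul h1 (by linarith) (by positivity) (by norm_num)
  have h2 : (x*y)^3 * (7 + x + y) ≤ 22 * (x*y)^2 := by
    calc (x*y)^3 * (7 + x + y) = (x*y)^2 * (x*y*(7+x+y)) := by ring
      _ ≤ (x*y)^2 * (0.0529 * 7.46) :=
        mul_le_mul_of_nonneg_left hs (sq_nonneg (x*y))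
      _ ≤ 22 * (x*y)^2 := by nlinarith [sq_nonneg (x*y)]
  have hQ : 0 < 3*x^2 + 3*x*y + 3*y^2 + 13*x*y^2 + 13*x^2*y + 22*x^2*y^2
      - 7*x^3*y^3 - x^3*y^4 - x^4*y^3 := by nlinarith [h2, hpr, sq_nonneg (x*y)]
  have ha' : a = x + 1 := by simp [hxdef]
  have hb' : b = y + 1 := by simp [hydef]
  rw [ha', hb']
  nlinarith [mul_pos (sub_pos.2 hxy) hQ]
end
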